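/- Let α be irrational, f : S¹ → S¹ the rotation z ↦ z·e^{2πiα}, U = { z ∈ S¹ : Re z < 0 }, and A = { i ∈ ℕ₀ : f^i(1) ∈ U }. Then A belongs to F_iap* (A meets every infinite arithmetic progression ⟨p,m⟩ = {p, p+m, p+2m, …}) but A is not thick. In particular F_iap* \ F_thick ≠ ∅. -/

import Mathlib

open Set

private lemma walk_gen (x r a b : ℝ) (h0 : 0 ≤ a) (hab : a < b) (hb1 : b ≤ 1)
    (hr : r ≠ 0) (hrab : |r| < b - a) : ∃ q : ℕ, Int.fract (x + q * r) ∈ Set.Ioo a b := by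
  classical
  rcases hr.lt_or_gt with hneg | hpos
  · -- r < 0
    rw [abs_of_neg hneg] at hrab
    set j : ℤ := ⌊x⌋ - 1 with hj
    have hx : (j : ℝ) + b ≤ x := by
      have := Int.floor_le x; push_cast [hj]; linarith
    have hex : ∃ q : ℕ, x + q * r < (j : ℝ) + b := by
      obtain ⟨q, hq⟩ := exists_nat_gt ((x - ((j : ℝ) + b)) / (-r))
      refine ⟨q, ?_⟩
      rw [div_lt_iff₀ (by linarith)] at hq; nlinarith
    set q₀ := Nat.find hex with hq₀
    have hq₀s : x + q₀ * r < (j : ℝ) + b := Nat.find_spec hex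
    have hq₀pos : 0 < q₀ := by
      rcases Nat.eq_zero_or_pos q₀ with h | h
      · exfalso; rw [h] at hq₀s; push_cast at hq₀s; linarith
      · exact h
    have hprev : ¬ (x + (q₀ - 1 : ℕ) * r < (j : ℝ) + b) := Nat.find_min hex (by omega)
    push_neg at hprev
    have hcast : ((q₀ - 1 : ℕ) : ℝ) = (q₀ : ℝ) - 1 := by
      push_cast [Nat.cast_sub hq₀pos]; ring
    rw [hcast] at hprev
    have hlb : (j : ℝ) + a < x + q₀ * r := by nlinarith
    have hfl : ⌊x + (q₀ : ℝ) * r⌋ = j := by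
      rw [Int.floor_eq_iff]; constructor <;> [linarith; (push_cast; linarith)]
    refine ⟨q₀, ?_, ?_⟩ <;> rw [Int.fract, hfl] <;> linarith
  · -- 0 < r
    rw [abs_of_pos hpos] at hrab
    set j : ℤ := ⌈x⌉ with hj
    have hx : x ≤ (j : ℝ) + a := by
      have := Int.le_ceil x; push_cast [hj]; linarith
    have hex : ∃ q : ℕ, (j : ℝ) + a < x + q * r := by
      obtain ⟨q, hq⟩ := exists_nat_gt (((j : ℝ) + a - x) / r)
      refine ⟨q, ?_⟩
      rw [div_lt_iff₀ hpos] at hq; nlinarith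
    set q₀ := Nat.find hex with hq₀
    have hq₀s : (j : ℝ) + a < x + q₀ * r := Nat.find_spec hex
    have hq₀pos : 0 < q₀ := by
      rcases Nat.eq_zero_or_pos q₀ with h | h
      · exfalso; rw [h] at hq₀s; push_cast at hq₀s; linarith
      · exact h
    have hprev : ¬ ((j : ℝ) + a < x + (q₀ - 1 : ℕ) * r) := Nat.find_min hex (by omega)
    push_neg at hprev
    have hcast : ((q₀ - 1 : ℕ) : ℝ) = (q₀ : ℝ) - 1 := by
      push_cast [Nat.cast_sub hq₀pos]; ring
    rw [hcast] at hprev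
    have hub : x + q₀ * r < (j : ℝ) + b := by nlinarith
    have hfl : ⌊x + (q₀ : ℝ) * r⌋ = j := by
      rw [Int.floor_eq_iff]; constructor <;> [linarith; (push_cast; linarith)]
    refine ⟨q₀, ?_, ?_⟩ <;> rw [Int.fract, hfl] <;> linarith

private lemma fract_dense (β x a b : ℝ) (hβ : Irrational β) (h0 : 0 ≤ a) (hab : a < b)
    (hb1 : b ≤ 1) : ∃ q : ℕ, Int.fract (x + q * β) ∈ Set.Ioo a b := by
  obtain ⟨N, hN⟩ := exists_nat_gt (1 / (b - a))
  have hNpos : 0 < N := by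
    have hba : (0:ℝ) < b - a := by linarith
    have h1 : (0 : ℝ) < 1 / (b - a) := by positivity
    exact_mod_cast (show (0:ℝ) < N by linarith)
  obtain ⟨k, hk0, hkN, hk⟩ := Real.exists_nat_abs_mul_sub_round_le β hNpos
  set r := (k : ℝ) * β - round ((k : ℝ) * β) with hr
  have hrne : r ≠ 0 := by
    have h1 : Irrational ((k : ℝ) * β) := hβ.natCast_mul hk0.ne'
    have h2 : Irrational r := h1.sub_intCast _
    exact_mod_cast h2.ne_int 0
  have hrsmall : |r| < b - a := by
    have h2 : (1 : ℝ) / (N + 1) < 1 / N := by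
      apply one_div_lt_one_div_of_lt
      · exact_mod_cast hNpos
      · linarith
    have h3 : (1 : ℝ) / N < b - a := by
      rw [div_lt_iff₀ (by exact_mod_cast hNpos)]
      rw [div_lt_iff₀ (by linarith)] at hN
      nlinarith
    calc |r| ≤ 1 / (N + 1) := hk
      _ < b - a := by linarith
  obtain ⟨q, hq⟩ := walk_gen x r a b h0 hab hb1 hrne hrsmall
  refine ⟨q * k, ?_⟩
  have : x + (q * k : ℕ) * β = (x + q * r) + (q * round ((k:ℝ) * β) : ℤ) := by
    push_cast [hr]; ring
  rw [this, Int.fract_add_intCast]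
  exact hq

private lemma cos_two_pi_fract_lt_zero_iff (t : ℝ) :
    Real.cos (2 * Real.pi * t) < 0 ↔ Int.fract t ∈ Set.Ioo (1/4 : ℝ) (3/4) := by
  have hπ := Real.pi_pos
  have hper : Real.cos (2 * Real.pi * t) = Real.cos (2 * Real.pi * Int.fract t) := by
    have : 2 * Real.pi * t = 2 * Real.pi * Int.fract t + ⌊t⌋ * (2 * Real.pi) := by
      rw [Int.fract]; ring
    rw [this, Real.cos_add_int_mul_two_pi]
  set s := Int.fract t with hs
  have hs0 : 0 ≤ s := Int.fract_nonneg t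
  have hs1 : s < 1 := Int.fract_lt_one t
  rw [hper]
  constructor
  · intro h
    by_contra hc
    simp only [Set.mem_Ioo, not_and_or, not_lt] at hc
    rcases hc with hc | hc
    · have : 0 ≤ Real.cos (2 * Real.pi * s) := by
        apply Real.cos_nonneg_of_mem_Icc
        constructor <;> nlinarith
      linarith
    · have heq : Real.cos (2 * Real.pi * s) = Real.cos (2 * Real.pi * s - 2 * Real.pi) :=
        (Real.cos_sub_two_pi _).symm
      have : 0 ≤ Real.cos (2 * Real.pi * s - 2 * Real.pi) := by
        apply Real.cos_nonneg_of_mem_Icc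
        constructor <;> nlinarith
      linarith [heq ▸ this]
  · rintro ⟨h1, h2⟩
    apply Real.cos_neg_of_pi_div_two_lt_of_lt <;> nlinarith

private lemma step_lemma (y u : ℝ) (hy : y ∈ Set.Ioo (1/4 : ℝ) (3/4))
    (hu : u ∈ Set.Ioo (1/4 : ℝ) (1/2))
    (h : Int.fract (y + u) ∈ Set.Ioo (1/4 : ℝ) (3/4)) : Int.fract (y + u) = y + u := by
  obtain ⟨hy1, hy2⟩ := hy
  obtain ⟨hu1, hu2⟩ := hu
  rcases le_or_gt 1 (y + u) with hge | hlt
  · exfalso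
    have he : Int.fract (y + u) = y + u - 1 := by
      have : Int.fract (y + u) = Int.fract ((y + u - 1) + (1 : ℤ)) := by norm_num
      rw [this, Int.fract_add_intCast, Int.fract_eq_self.2 ⟨by linarith, by linarith⟩]
    rw [he] at h
    have := h.1
    linarith
  · exact Int.fract_eq_self.2 ⟨by linarith, hlt⟩

/-- For an irrational rotation of the circle, the set of visit times of `1` to
the open left half `{Re z < 0}` meets every infinite arithmetic progression but
is not thick. -/
theorem stmt14 (α : ℝ) (hα : Irrational α) (f : ℂ → ℂ)
    (hf : f = fun z => z * Complex.exp (2 * Real.pi * α * Complex.I))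
    (A : Set ℕ) (hA : A = {i | (f^[i] 1).re < 0}) :
    (∀ p : ℕ, ∀ m : ℕ, 1 ≤ m → ∃ q : ℕ, p + q * m ∈ A) ∧
    ¬(∀ j : ℕ, 1 ≤ j → ∃ i : ℕ, ∀ l < j, i + l ∈ A) := by
  subst hf hA
  have hiter : ∀ i : ℕ, ((fun z => z * Complex.exp (2 * Real.pi * α * Complex.I))^[i] 1).re
      = Real.cos (2 * Real.pi * (α * i)) := by
    intro i
    have hpow : (fun z => z * Complex.exp (2 * Real.pi * α * Complex.I))^[i] 1
        = Complex.exp (((2 * Real.pi * (α * i) : ℝ) : ℂ) * Complex.I) := by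
      induction i with
      | zero => simp
      | succ n ih =>
        rw [Function.iterate_succ_apply', ih, ← Complex.exp_add]
        congr 1
        push_cast
        ring
    rw [hpow, Complex.exp_ofReal_mul_I_re]
  have hmem : ∀ i : ℕ, (i ∈ {i | (((fun z => z * Complex.exp (2 * Real.pi * α * Complex.I))^[i] 1).re < 0)})
      ↔ Int.fract (α * i) ∈ Set.Ioo (1/4 : ℝ) (3/4) := by
    intro i
    simp only [Set.mem_setOf_eq, hiter i]
    exact cos_two_pi_fract_lt_zero_iff (α * i)
  constructor
  · intro p m hm
    have hβ : Irrational ((m : ℝ) * α) := hα.natCast_mul (by omega)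
    obtain ⟨q, hq⟩ := fract_dense ((m : ℝ) * α) ((p : ℝ) * α) (1/4) (3/4) hβ
      (by norm_num) (by norm_num) (by norm_num)
    refine ⟨q, (hmem _).2 ?_⟩
    have : α * ((p + q * m : ℕ) : ℝ) = (p : ℝ) * α + q * ((m : ℝ) * α) := by
      push_cast; ring
    rw [this]
    exact hq
  · intro hthick
    obtain ⟨n, hn⟩ := fract_dense α 0 (1/4) (1/2) hα (by norm_num) (by norm_num) (by norm_num)
    rw [zero_add] at hn
    have hnpos : 0 < n := by
      rcases Nat.eq_zero_or_pos n with h | h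
      · exfalso; rw [h] at hn; norm_num at hn
      · exact h
    set u := Int.fract ((n : ℝ) * α) with hu
    obtain ⟨i, hi⟩ := hthick (2 * n + 1) (by omega)
    have h0 := (hmem (i + 0)).1 (hi 0 (by omega))
    rw [Nat.add_zero] at h0
    have h1 := (hmem (i + n)).1 (hi n (by omega))
    have h2 := (hmem (i + 2 * n)).1 (hi (2 * n) (by omega))
    set x := Int.fract (α * i) with hx
    have e1 : Int.fract (α * ((i + n : ℕ) : ℝ)) = Int.fract (x + u) := by
      have : α * ((i + n : ℕ) : ℝ) = (x + u) + ((⌊α * i⌋ + ⌊(n : ℝ) * α⌋ : ℤ) : ℝ) := by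
        push_cast [hx, hu, Int.fract]; ring
      rw [this]
      exact_mod_cast Int.fract_add_intCast _ _
    rw [e1] at h1
    have s1 : Int.fract (x + u) = x + u := step_lemma x u h0 hn h1
    rw [s1] at h1
    have e2 : Int.fract (α * ((i + 2 * n : ℕ) : ℝ)) = Int.fract ((x + u) + u) := by
      have : α * ((i + 2 * n : ℕ) : ℝ)
          = ((x + u) + u) + ((⌊α * i⌋ + ⌊(n : ℝ) * α⌋ + ⌊(n : ℝ) * α⌋ : ℤ) : ℝ) := by
        push_cast [hx, hu, Int.fract]; ring
      rw [this]
      exact_mod_cast Int.fract_add_intCast _ _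
    rw [e2] at h2
    have s2 : Int.fract ((x + u) + u) = (x + u) + u := step_lemma (x + u) u h1 hn h2
    rw [s2] at h2
    obtain ⟨_, hlt⟩ := h2
    obtain ⟨hx1, _⟩ := h0
    obtain ⟨hu1, _⟩ := hn
    linarith
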